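/- Let κ ≥ λ be infinite cardinals with κ^{<λ} = κ, let P be the set of partial functions from κ to κ of cardinality less than λ, and let κ₁, …, κ_d be uncountable regular cardinals with κ₁ = κ⁺ and, for each i < d, κ_{i+1} = μᵢ⁺ for some μᵢ ≥ 2^{κᵢ} with μᵢ^{κᵢ} = μᵢ. Then for every p : κ₁ × ⋯ × κ_d → P there exist stationary sets κ′ᵢ ⊆ κᵢ such that ⋃ p[κ′₁ × ⋯ × κ′_d] is a function (i.e., all the partial functions p(x₁,…,x_d) for xᵢ ∈ κ′ᵢ are pairwise compatible). -/

import Mathlib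

open Cardinal Set

/-- `C` is closed and unbounded in the ordinal `θ`. -/
def IsClubIn (C : Set Ordinal) (θ : Ordinal) : Prop :=
  (∀ a < θ, ∃ b ∈ C, a < b ∧ b < θ) ∧
  (∀ a < θ, a ≠ 0 → (∀ b < a, ∃ c ∈ C, b ≤ c ∧ c < a) → a ∈ C)

/-- `S` is stationary in the ordinal `θ`: it meets every club subset of `θ`. -/
def IsStationaryIn (S : Set Ordinal) (θ : Ordinal) : Prop :=
  ∀ C : Set Ordinal, IsClubIn C θ → (S ∩ C).Nonempty

lemma isClubIn_Iio {θ : Cardinal.{0}} (hθ : ℵ₀ ≤ θ) : IsClubIn (Iio θ.ord) θ.ord := by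
  have hlim := Cardinal.isSuccLimit_ord hθ
  exact ⟨fun a ha => ⟨Order.succ a, hlim.succ_lt ha, Order.lt_succ a, hlim.succ_lt ha⟩,
    fun a ha _ _ => ha⟩

lemma isClubIn_iInter {θ : Cardinal.{0}} (hreg : θ.IsRegular) (hunc : ℵ₀ < θ)
    {ι : Type} [Nonempty ι] (hι : #ι < θ) (A : ι → Set Ordinal)
    (hA : ∀ i, IsClubIn (A i) θ.ord) : IsClubIn (⋂ i, A i) θ.ord := by
  have hcof : θ.ord.cof = θ := hreg.cof_eq
  constructor
  · intro a ha
    have hch : ∀ x : Ordinal, ∀ i : ι, ∃ b : Ordinal,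
        x < θ.ord → (b ∈ A i ∧ x < b ∧ b < θ.ord) := by
      intro x i
      by_cases hx : x < θ.ord
      · obtain ⟨b, hb, h1, h2⟩ := (hA i).1 x hx
        exact ⟨b, fun _ => ⟨hb, h1, h2⟩⟩
      · exact ⟨0, fun h => absurd h hx⟩
    choose nxt hnxt using hch
    set g : Ordinal → Ordinal := fun x => ⨆ i, nxt x i with hg
    have hgx : ∀ x, x < θ.ord → x < g x ∧ g x < θ.ord := by
      intro x hx
      refine ⟨lt_of_lt_of_le (hnxt x (Classical.arbitrary ι) hx).2.1
        (Ordinal.le_iSup _ _), ?_⟩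
      exact Ordinal.iSup_lt_ord (by rwa [hcof]) fun i => (hnxt x i hx).2.2
    let s : ℕ → Ordinal := fun n => Nat.rec a (fun _ x => g x) n
    have hs_succ : ∀ n, s (n + 1) = g (s n) := fun n => rfl
    have key : ∀ n, s n < θ.ord := by
      intro n; induction n with
      | zero => exact ha
      | succ n ihn => exact (hgx _ ihn).2
    have smono : ∀ n, s n < s (n + 1) := fun n => (hgx _ (key n)).1
    set b := ⨆ n, s n with hb
    have hsb : ∀ n, s n ≤ b := Ordinal.le_iSup s
    have hbθ : b < θ.ord := Ordinal.iSup_lt_ord (by rw [hcof, Cardinal.mk_nat]; exact hunc) key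
    have hab : a < b := lt_of_lt_of_le (smono 0) (hsb 1)
    refine ⟨b, mem_iInter.2 fun i => ?_, hab, hbθ⟩
    refine (hA i).2 b hbθ (pos_iff_ne_zero.1 (lt_of_le_of_lt (zero_le (a := a)) hab))
      fun c hc => ?_
    obtain ⟨n, hn⟩ := Ordinal.lt_iSup_iff.1 hc
    refine ⟨nxt (s n) i, (hnxt _ i (key n)).1, ?_, ?_⟩
    · exact le_of_lt (lt_trans hn (hnxt _ i (key n)).2.1)
    · calc nxt (s n) i ≤ g (s n) := Ordinal.le_iSup _ _
        _ = s (n + 1) := (hs_succ n).symm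
        _ < s (n + 2) := smono (n + 1)
        _ ≤ b := hsb (n + 2)
  · intro a ha h0 hcl
    refine mem_iInter.2 fun i => (hA i).2 a ha h0 fun b hb => ?_
    obtain ⟨c, hc, h1, h2⟩ := hcl b hb
    exact ⟨c, mem_iInter.1 hc i, h1, h2⟩

lemma exists_stationary_fiber {θ : Cardinal.{0}} (hreg : θ.IsRegular) (hunc : ℵ₀ < θ)
    {α : Type 1} (f : Ordinal → α) (hrange : #(f '' Iio θ.ord) < Cardinal.lift.{1} θ) :
    ∃ a : α, IsStationaryIn {x | x < θ.ord ∧ f x = a} θ.ord := by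
  by_contra hcon
  push_neg at hcon
  have hclub : ∀ a : α, ∃ C, IsClubIn C θ.ord ∧ {x | x < θ.ord ∧ f x = a} ∩ C = ∅ := by
    intro a
    have h1 := hcon a
    rw [IsStationaryIn] at h1
    push_neg at h1
    obtain ⟨C, hC1, hC2⟩ := h1
    exact ⟨C, hC1, hC2⟩
  choose C hCclub hCdisj using hclub
  obtain ⟨c, hc, hceq⟩ := Cardinal.lt_lift_iff.1 hrange
  obtain ⟨e⟩ : Nonempty (c.out ≃ (f '' Iio θ.ord)) := by
    rw [← Cardinal.lift_mk_eq', Cardinal.mk_out, Cardinal.lift_id'.{0,1}]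
    exact hceq
  have hpos : (0 : Ordinal) < θ.ord := hreg.ord_pos
  have : Nonempty c.out := ⟨e.symm ⟨f 0, mem_image_of_mem f hpos⟩⟩
  have hcard : #c.out < θ := by rw [Cardinal.mk_out]; exact hc
  have hint := isClubIn_iInter hreg hunc hcard (fun i => C (e i).1) (fun i => hCclub _)
  obtain ⟨b, hbmem, _, hbθ⟩ := hint.1 0 hpos
  have hfb : f b ∈ f '' Iio θ.ord := mem_image_of_mem f hbθ
  have hbC : b ∈ C (f b) := by
    have h2 := mem_iInter.1 hbmem (e.symm ⟨f b, hfb⟩)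
    rwa [Equiv.apply_symm_apply] at h2
  have : b ∈ {x | x < θ.ord ∧ f x = f b} ∩ C (f b) := ⟨⟨hbθ, rfl⟩, hbC⟩
  rw [hCdisj] at this
  exact this

def PFq (kappa lam : Cardinal.{0}) : Set (Set (Ordinal × Ordinal)) :=
  {t | (∀ ab ∈ t, ab.1 < kappa.ord ∧ ab.2 < kappa.ord) ∧ #t < Cardinal.lift.{1} lam}

lemma mk_PFq_le {kappa lam : Cardinal.{0}} (hkappa : ℵ₀ ≤ kappa) (hlam : ℵ₀ ≤ lam)
    (hkl : lam ≤ kappa) (hpow : kappa ^< lam = kappa) :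
    #(PFq kappa lam) ≤ Cardinal.lift.{1} kappa := by
  set s : Set (Ordinal × Ordinal) := Iio kappa.ord ×ˢ Iio kappa.ord with hs
  have hks : #s ≤ Cardinal.lift.{1} kappa := by
    rw [hs]
    have := Cardinal.mk_congr (Equiv.Set.prod (Iio kappa.ord) (Iio kappa.ord))
    rw [this, Cardinal.mk_prod, Ordinal.mk_Iio_ordinal, Cardinal.card_ord]
    simp only [Cardinal.lift_id]
    rw [Cardinal.mul_eq_self]
    exact Cardinal.aleph0_le_lift.2 hkappa
  have hsub : PFq kappa lam ⊆
      ⋃ o : ↥(Iio lam.ord), {t | t ⊆ s ∧ #t ≤ Cardinal.lift.{1} ((o : Ordinal).card)} := by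
    rintro t ⟨ht1, ht2⟩
    obtain ⟨c, hc, hceq⟩ := Cardinal.lt_lift_iff.1 ht2
    refine mem_iUnion.2 ⟨⟨c.ord, Cardinal.ord_lt_ord.2 hc⟩, ?_, ?_⟩
    · intro ab hab
      exact Set.mem_prod.2 ⟨(ht1 ab hab).1, (ht1 ab hab).2⟩
    · simp only [Cardinal.card_ord]
      rw [hceq]
  have hIio : #(↥(Iio lam.ord)) = Cardinal.lift.{1} lam := by
    rw [Ordinal.mk_Iio_ordinal, Cardinal.card_ord]
  have hbound : ∀ o : ↥(Iio lam.ord),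
      #({t | t ⊆ s ∧ #t ≤ Cardinal.lift.{1} ((o : Ordinal).card)}) ≤ Cardinal.lift.{1} kappa := by
    intro o
    have h1 := Cardinal.mk_bounded_subset_le s (Cardinal.lift.{1} ((o : Ordinal).card))
    refine le_trans h1 ?_
    have hmax : max (#s) ℵ₀ ≤ Cardinal.lift.{1} kappa :=
      max_le hks (Cardinal.aleph0_le_lift.2 hkappa)
    refine le_trans (Cardinal.power_le_power_right hmax) ?_
    rw [← Cardinal.lift_power]
    rw [Cardinal.lift_le]
    have hlt : (o : Ordinal).card < lam := Cardinal.lt_ord.1 o.2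
    exact le_trans (Cardinal.le_powerlt kappa hlt) (le_of_eq hpow)
  calc #(PFq kappa lam) ≤ #(⋃ o : ↥(Iio lam.ord),
        {t | t ⊆ s ∧ #t ≤ Cardinal.lift.{1} ((o : Ordinal).card)}) :=
        Cardinal.mk_le_mk_of_subset hsub
    _ ≤ #(↥(Iio lam.ord)) * ⨆ o : ↥(Iio lam.ord),
        #({t | t ⊆ s ∧ #t ≤ Cardinal.lift.{1} ((o : Ordinal).card)}) := Cardinal.mk_iUnion_le _
    _ ≤ Cardinal.lift.{1} lam * Cardinal.lift.{1} kappa := by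
        have : Nonempty (↥(Iio lam.ord)) := by
          refine ⟨⟨0, ?_⟩⟩
          rw [mem_Iio, Cardinal.lt_ord]
          simpa using lt_of_lt_of_le Cardinal.aleph0_pos hlam
        exact mul_le_mul' (le_of_eq hIio) (ciSup_le' hbound)
    _ ≤ Cardinal.lift.{1} kappa * Cardinal.lift.{1} kappa :=
        mul_le_mul' (Cardinal.lift_le.2 hkl) le_rfl
    _ = Cardinal.lift.{1} kappa := Cardinal.mul_eq_self (Cardinal.aleph0_le_lift.2 hkappa)

lemma aux_const (kappa lam : Cardinal.{0}) (hkappa : ℵ₀ ≤ kappa) (hlam : ℵ₀ ≤ lam)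
    (hkl : lam ≤ kappa) (hpow : kappa ^< lam = kappa) :
    ∀ (d : ℕ) (K : Fin d → Cardinal.{0}), (∀ i, (K i).IsRegular) → (∀ i, ℵ₀ < K i) →
    (∀ i j : Fin d, i.1 ≤ j.1 → K i ≤ K j) →
    (∀ i : Fin d, i.1 = 0 → kappa < K i) →
    (∀ i j : Fin d, j.1 = i.1 + 1 → kappa ^ K i < K j) →
    ∀ p : (Fin d → Ordinal) → Set (Ordinal × Ordinal),
    (∀ x, (∀ i, x i < (K i).ord) → p x ∈ PFq kappa lam) →
    ∃ S : Fin d → Set Ordinal,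
      (∀ i, S i ⊆ Iio (K i).ord ∧ IsStationaryIn (S i) (K i).ord) ∧
      ∀ x y, (∀ i, x i ∈ S i) → (∀ i, y i ∈ S i) → p x = p y := by
  intro d
  induction d with
  | zero =>
    intro K _ _ _ _ _ p _
    refine ⟨fun i => i.elim0, fun i => i.elim0, fun x y _ _ => ?_⟩
    have : x = y := funext fun i => i.elim0
    rw [this]
  | succ d ih =>
    intro K hreg hunc hmono h0 hsucc p hp
    classical
    set θ := K (Fin.last d) with hθ
    have hregθ : θ.IsRegular := hreg _
    have huncθ : ℵ₀ < θ := hunc _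
    set f : Ordinal → ((Fin d → Ordinal) → Set (Ordinal × Ordinal)) :=
      fun x head => if ∀ j : Fin d, head j < (K j.castSucc).ord
        then p (Fin.snoc head x) else ∅ with hf
    have hval : ∀ x : Ordinal, x < θ.ord → ∀ h : Fin d → Ordinal,
        (∀ j, h j < (K j.castSucc).ord) →
        f x h = p (Fin.snoc h x) ∧ p (Fin.snoc h x) ∈ PFq kappa lam := by
      intro x hx h hh
      refine ⟨by simp only [hf, if_pos hh], ?_⟩
      apply hp
      intro i
      refine Fin.lastCases ?_ ?_ i
      · rw [Fin.snoc_last]; exact hx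
      · intro j; rw [Fin.snoc_castSucc]; exact hh j
    -- bound the image of f
    have hgmem : ∀ g ∈ f '' Iio θ.ord,
        ∀ h : {h : Fin d → Ordinal // ∀ j, h j < (K j.castSucc).ord},
        g h.1 ∈ PFq kappa lam := by
      rintro g ⟨x, hx, rfl⟩ h
      rw [(hval x hx h.1 h.2).1]
      exact (hval x hx h.1 h.2).2
    have hinj : #(f '' Iio θ.ord) ≤
        #({h : Fin d → Ordinal // ∀ j, h j < (K j.castSucc).ord} → PFq kappa lam) := by
      apply Cardinal.mk_le_of_injective
        (f := fun g h => (⟨g.1 h.1, hgmem g.1 g.2 h⟩ : PFq kappa lam))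
      intro g g' hgg'
      apply Subtype.ext
      obtain ⟨x, hx, hgx⟩ := g.2
      obtain ⟨x', hx', hgx'⟩ := g'.2
      funext h
      by_cases hh : ∀ j : Fin d, h j < (K j.castSucc).ord
      · have h2 := congrFun hgg' ⟨h, hh⟩
        exact congrArg Subtype.val h2
      · rw [← hgx, ← hgx']
        simp only [hf, if_neg hh]
    have hVH : ∃ M : Cardinal.{0},
        #{h : Fin d → Ordinal // ∀ j, h j < (K j.castSucc).ord} ≤ Cardinal.lift.{1} M ∧
        kappa ^ M < θ := by
      cases d with
      | zero =>
        refine ⟨1, ?_, ?_⟩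
        · have hsing : Subsingleton {h : Fin 0 → Ordinal // ∀ j, h j < (K j.castSucc).ord} :=
            ⟨fun a b => Subtype.ext (funext fun j => j.elim0)⟩
          rw [Cardinal.lift_one]
          exact Cardinal.le_one_iff_subsingleton.2 hsing
        · rw [Cardinal.power_one]
          exact h0 (Fin.last 0) rfl
      | succ e =>
        set m : Fin (e + 2) := ⟨e, by omega⟩ with hm
        refine ⟨K m, ?_, hsucc m (Fin.last (e + 1)) rfl⟩
        have hcs : ∀ j : Fin (e + 1), (j.castSucc : ℕ) ≤ (m : ℕ) := by
          intro j
          simp only [Fin.coe_castSucc, hm]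
          omega
        have hsubinj : #{h : Fin (e+1) → Ordinal // ∀ j, h j < (K j.castSucc).ord} ≤
            #(Fin (e + 1) → ↥(Iio (K m).ord)) := by
          apply Cardinal.mk_le_of_injective (f := fun h j =>
            (⟨h.1 j, lt_of_lt_of_le (h.2 j)
              (Cardinal.ord_le_ord.2 (hmono j.castSucc m (hcs j)))⟩ :
              ↥(Iio (K m).ord)))
          intro a b hab
          apply Subtype.ext
          funext j
          have h3 := congrFun hab j
          exact congrArg Subtype.val h3
        refine le_trans hsubinj ?_
        rw [Cardinal.mk_arrow, Ordinal.mk_Iio_ordinal, Cardinal.card_ord,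
          Cardinal.mk_fin, Cardinal.lift_id'.{0,1}]
        have : (Cardinal.lift.{1,0} (K m)) ^ ((e+1 : ℕ) : Cardinal.{1}) = Cardinal.lift.{1,0} (K m) :=
          Cardinal.power_nat_eq (Cardinal.aleph0_le_lift.2 (hunc m).le) (by omega)
        rw [Cardinal.lift_natCast]
        exact le_of_eq this
    obtain ⟨M, hM1, hM2⟩ := hVH
    have himg : #(f '' Iio θ.ord) < Cardinal.lift.{1} θ := by
      have hPF : #(PFq kappa lam) ≤ Cardinal.lift.{1} kappa := mk_PFq_le hkappa hlam hkl hpow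
      calc #(f '' Iio θ.ord) ≤
          #({h : Fin d → Ordinal // ∀ j, h j < (K j.castSucc).ord} → PFq kappa lam) := hinj
        _ = #(PFq kappa lam) ^ #{h : Fin d → Ordinal // ∀ j, h j < (K j.castSucc).ord} :=
            (Cardinal.power_def _ _).symm
        _ ≤ (Cardinal.lift.{1} kappa) ^
            #{h : Fin d → Ordinal // ∀ j, h j < (K j.castSucc).ord} :=
            Cardinal.power_le_power_right hPF
        _ ≤ (Cardinal.lift.{1} kappa) ^ Cardinal.lift.{1} M := by
            apply Cardinal.power_le_power_left ?_ hM1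
            simpa using (lt_of_lt_of_le Cardinal.aleph0_pos hkappa).ne'
        _ = Cardinal.lift.{1} (kappa ^ M) := (Cardinal.lift_power _ _).symm
        _ < Cardinal.lift.{1} θ := Cardinal.lift_lt.2 hM2
    obtain ⟨a₀, hstat⟩ := exists_stationary_fiber hregθ huncθ f himg
    set Stop : Set Ordinal := {x | x < θ.ord ∧ f x = a₀} with hStop
    obtain ⟨x₀, hx₀, _⟩ := hstat (Iio θ.ord) (isClubIn_Iio hregθ.aleph0_le)
    have hq : ∀ h : Fin d → Ordinal, (∀ j, h j < (K j.castSucc).ord) →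
        a₀ h ∈ PFq kappa lam := by
      intro h hh
      rw [← hx₀.2]
      exact hgmem (f x₀) ⟨x₀, hx₀.1, rfl⟩ ⟨h, hh⟩
    obtain ⟨S', hS'1, hS'2⟩ := ih (fun j => K j.castSucc)
      (fun j => hreg _) (fun j => hunc _)
      (fun i j hij => hmono i.castSucc j.castSucc (by simpa using hij))
      (fun i hi => h0 i.castSucc (by simpa using hi))
      (fun i j hij => hsucc i.castSucc j.castSucc (by simpa using hij))
      a₀ hq
    refine ⟨fun i => Fin.lastCases Stop S' i, ?_, ?_⟩
    · intro i
      refine Fin.lastCases ?_ ?_ i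
      · simp only [Fin.lastCases_last]
        exact ⟨fun x hx => hx.1, hstat⟩
      · intro j
        simp only [Fin.lastCases_castSucc]
        exact hS'1 j
    · intro x y hx hy
      have hxt : x (Fin.last d) ∈ Stop := by
        have := hx (Fin.last d); simpa using this
      have hyt : y (Fin.last d) ∈ Stop := by
        have := hy (Fin.last d); simpa using this
      have hxc : ∀ j : Fin d, Fin.init x j ∈ S' j := by
        intro j
        have := hx j.castSucc; simpa [Fin.init] using this
      have hyc : ∀ j : Fin d, Fin.init y j ∈ S' j := by
        intro j
        have := hy j.castSucc; simpa [Fin.init] using this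
      have hxv : ∀ j : Fin d, Fin.init x j < (K j.castSucc).ord :=
        fun j => (hS'1 j).1 (hxc j)
      have hyv : ∀ j : Fin d, Fin.init y j < (K j.castSucc).ord :=
        fun j => (hS'1 j).1 (hyc j)
      have hpx : p x = a₀ (Fin.init x) := by
        conv_lhs => rw [← Fin.snoc_init_self x]
        rw [← (hval (x (Fin.last d)) hxt.1 (Fin.init x) hxv).1, hxt.2]
      have hpy : p y = a₀ (Fin.init y) := by
        conv_lhs => rw [← Fin.snoc_init_self y]
        rw [← (hval (y (Fin.last d)) hyt.1 (Fin.init y) hyv).1, hyt.2]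
      rw [hpx, hpy]
      exact hS'2 _ _ hxc hyc

theorem stmt_12 (kappa lam : Cardinal.{0}) (hkappa : ℵ₀ ≤ kappa) (hlam : ℵ₀ ≤ lam)
    (hkl : lam ≤ kappa) (hpow : kappa ^< lam = kappa)
    (d : ℕ) (hd : 1 ≤ d) (K : Fin d → Cardinal.{0})
    (hreg : ∀ i, (K i).IsRegular) (hunc : ∀ i, ℵ₀ < K i)
    (hK0 : K ⟨0, hd⟩ = Order.succ kappa)
    (hstep : ∀ i : Fin d, ∀ h : i.1 + 1 < d, ∃ mu : Cardinal.{0},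
      (2 : Cardinal) ^ K i ≤ mu ∧ K ⟨i.1 + 1, h⟩ = Order.succ mu ∧ mu ^ K i = mu)
    (p : (Fin d → Ordinal) → Set (Ordinal × Ordinal))
    (hgraph : ∀ x : Fin d → Ordinal, (∀ i, x i < (K i).ord) →
      (∀ ab ∈ p x, ab.1 < kappa.ord ∧ ab.2 < kappa.ord) ∧
      (∀ a b b', (a, b) ∈ p x → (a, b') ∈ p x → b = b') ∧
      Cardinal.mk (p x) < Cardinal.lift.{1,0} lam) :
    ∃ S : Fin d → Set Ordinal,
      (∀ i, S i ⊆ Set.Iio (K i).ord ∧ IsStationaryIn (S i) (K i).ord) ∧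
      ∀ x y : Fin d → Ordinal, (∀ i, x i ∈ S i) → (∀ i, y i ∈ S i) →
        ∀ a b b', (a, b) ∈ p x → (a, b') ∈ p y → b = b' := by
  -- one-step strict monotonicity
  have sstep : ∀ (k : ℕ) (h : k + 1 < d), K ⟨k, by omega⟩ < K ⟨k + 1, h⟩ := by
    intro k h
    obtain ⟨mu, hmu1, hmu2, _⟩ := hstep ⟨k, by omega⟩ h
    calc K ⟨k, by omega⟩ < 2 ^ K ⟨k, by omega⟩ := Cardinal.cantor _
      _ ≤ mu := hmu1
      _ < Order.succ mu := Order.lt_succ mu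
      _ = K ⟨k + 1, h⟩ := hmu2.symm
  have hmono' : ∀ (n m : ℕ) (hnm : n ≤ m) (hm : m < d), K ⟨n, by omega⟩ ≤ K ⟨m, hm⟩ := by
    intro n m hnm
    induction m, hnm using Nat.le_induction with
    | base => intro hm; exact le_rfl
    | succ m hnm ih =>
      intro hm
      exact le_trans (ih (by omega)) (le_of_lt (sstep m hm))
  have hmono : ∀ i j : Fin d, i.1 ≤ j.1 → K i ≤ K j := by
    intro i j hij
    have := hmono' i.1 j.1 hij j.2
    convert this using 2
  have h0 : ∀ i : Fin d, i.1 = 0 → kappa < K i := by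
    intro i hi
    have : i = ⟨0, hd⟩ := Fin.ext hi
    rw [this, hK0]
    exact Order.lt_succ kappa
  have hKp : ∀ i : Fin d, kappa < K i := by
    intro i
    refine lt_of_lt_of_le (h0 ⟨0, hd⟩ rfl) (hmono _ _ ?_)
    exact Nat.zero_le _
  have hsucc : ∀ i j : Fin d, j.1 = i.1 + 1 → kappa ^ K i < K j := by
    intro i j hij
    have hj : i.1 + 1 < d := hij ▸ j.2
    obtain ⟨mu, hmu1, hmu2, _⟩ := hstep i hj
    have hji : j = ⟨i.1 + 1, hj⟩ := Fin.ext hij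
    rw [hji, hmu2]
    have hle : kappa ^ K i ≤ mu := by
      calc kappa ^ K i ≤ (2 ^ K i) ^ K i :=
            Cardinal.power_le_power_right (le_of_lt (lt_trans (hKp i) (Cardinal.cantor _)))
        _ = 2 ^ (K i * K i) := Cardinal.power_mul.symm
        _ = 2 ^ K i := by rw [Cardinal.mul_eq_self (le_of_lt (hunc i))]
        _ ≤ mu := hmu1
    exact lt_of_le_of_lt hle (Order.lt_succ mu)
  have hp : ∀ x, (∀ i, x i < (K i).ord) → p x ∈ PFq kappa lam := by
    intro x hx
    exact ⟨(hgraph x hx).1, (hgraph x hx).2.2⟩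
  obtain ⟨S, hS1, hS2⟩ := aux_const kappa lam hkappa hlam hkl hpow d K hreg hunc hmono h0 hsucc p hp
  refine ⟨S, hS1, ?_⟩
  intro x y hx hy a b b' hb hb'
  have hyv : ∀ i, y i < (K i).ord := fun i => (hS1 i).1 (hy i)
  have hpe : p x = p y := hS2 x y hx hy
  exact (hgraph y hyv).2.1 a b b' (hpe ▸ hb) hb'
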